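/- For any number of clusters K ≥ 1, differential privacy parameters ε, δ ∈ (0,1), and Δ ∈ ℕ with Δ ≥ 1, let p = e^{−0.2ε/Δ} and r = 3(1 + log(1/δ)). Consider the mechanism that maps a histogram R ∈ ℕ^K to the distribution of (R₁ + Z₁, …, R_K + Z_K), where Z₁, …, Z_K are independent with Z_b ∼ NB(r, p). Then for any two histograms R, R' ∈ ℕ^K satisfying |R_b − R'_b| ≤ Δ for every b and Σ_{b=1}^{K} |R_b − R'_b| ≤ 2Δ (i.e., R and R' are the per-cluster query counts of two databases differing in the queries of a single client who makes at most Δ queries), the mechanism is (2ε, 2Δδ)-differentially private with respect to (R, R'). -/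

import Mathlib

open scoped ENNReal

/-- Probability mass function of the negative binomial distribution `NB(r, p)`:
`Pr(X = k) = (Γ(k+r)/(k!·Γ(r))) · p^k · (1−p)^r`. -/
noncomputable def nbPMF (r p : ℝ) (k : ℕ) : ℝ :=
  (Real.Gamma (k + r) / (Nat.factorial k * Real.Gamma r)) * p ^ k *
    Real.rpow (1 - p) r

/-- Mass function of the noisy-histogram mechanism on input histogram `R`: the
distribution of `(R₁ + Z₁, …, R_K + Z_K)` with the `Z_b ∼ NB(r,p)` independent. -/
noncomputable def noisyHist (K : ℕ) (r p : ℝ) (R : Fin K → ℕ) (v : Fin K → ℕ) : ℝ≥0∞ :=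
  ∏ b, if R b ≤ v b then ENNReal.ofReal (nbPMF r p (v b - R b)) else 0

/-- The probability mass assigned by a distribution to a subset `S`. -/
noncomputable def setProb {Ω : Type*} (ν : Ω → ℝ≥0∞) (S : Set Ω) : ℝ≥0∞ :=
  ∑' x : S, ν x

set_option maxHeartbeats 1000000

open MeasureTheory ProbabilityTheory

namespace NBDP


lemma nb_pos {r p : ℝ} (hr : 0 < r) (hp0 : 0 < p) (hp1 : p < 1) (k : ℕ) :
    0 < nbPMF r p k := by
  unfold nbPMF
  have h1 : 0 < (k : ℝ) + r := by positivity
  have h2 := Real.Gamma_pos_of_pos h1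
  have h3 := Real.Gamma_pos_of_pos hr
  have h4 : (0:ℝ) < 1 - p := by linarith
  have h5 : 0 < Real.rpow (1 - p) r := Real.rpow_pos_of_pos h4 r
  have h6 : (0:ℝ) < (Nat.factorial k : ℝ) := by positivity
  positivity

lemma nb_nonneg {r p : ℝ} (hr : 0 < r) (hp0 : 0 < p) (hp1 : p < 1) (k : ℕ) :
    0 ≤ nbPMF r p k := (nb_pos hr hp0 hp1 k).le

lemma nb_succ {r p : ℝ} (hr : 0 < r) (k : ℕ) :
    nbPMF r p (k + 1) = nbPMF r p k * (p * (((k : ℝ) + r) / ((k : ℝ) + 1))) := by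
  unfold nbPMF
  have hkr : ((k : ℝ) + r) ≠ 0 := by positivity
  have hΓ : Real.Gamma (((k : ℕ) + 1 : ℕ) + r) = ((k : ℝ) + r) * Real.Gamma ((k : ℝ) + r) := by
    have h := Real.Gamma_add_one hkr
    rw [← h]
    norm_num
    ring_nf
  rw [hΓ]
  have hfac : ((Nat.factorial (k + 1) : ℝ)) = ((k : ℝ) + 1) * (Nat.factorial k : ℝ) := by
    push_cast [Nat.factorial_succ]; ring
  rw [hfac]
  have h1 : ((k : ℝ) + 1) ≠ 0 := by positivity
  have h2 : (Nat.factorial k : ℝ) ≠ 0 := by positivity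
  have h3 : Real.Gamma r ≠ 0 ∨ True := Or.inr trivial
  rw [pow_succ]
  by_cases hΓr : Real.Gamma r = 0
  · simp [hΓr]
  · field_simp

section Steps
variable {r p : ℝ} (hr : 1 < r) (hp0 : 0 < p) (hp1 : p < 1)
include hr hp0 hp1

lemma nb_step_down (k : ℕ) : nbPMF r p k ≤ p⁻¹ * nbPMF r p (k + 1) := by
  have hr0 : 0 < r := by linarith
  rw [nb_succ hr0]
  have hnb := (nb_pos hr0 hp0 hp1 k).le
  have h1 : (1 : ℝ) ≤ ((k : ℝ) + r) / ((k : ℝ) + 1) := by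
    rw [le_div_iff₀ (by positivity)]
    linarith
  calc nbPMF r p k = p⁻¹ * (nbPMF r p k * (p * 1)) := by
        field_simp
    _ ≤ p⁻¹ * (nbPMF r p k * (p * (((k : ℝ) + r) / ((k : ℝ) + 1)))) := by
        gcongr

lemma nb_down_iter (k d : ℕ) : nbPMF r p k ≤ p⁻¹ ^ d * nbPMF r p (k + d) := by
  induction d with
  | zero => simp
  | succ d ih =>
    calc nbPMF r p k ≤ p⁻¹ ^ d * nbPMF r p (k + d) := ih
      _ ≤ p⁻¹ ^ d * (p⁻¹ * nbPMF r p (k + d + 1)) := by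
          have := nb_step_down hr hp0 hp1 (k + d)
          gcongr
      _ = p⁻¹ ^ (d + 1) * nbPMF r p (k + (d + 1)) := by
          rw [pow_succ]; ring_nf

lemma nb_step_up {β : ℝ} (hβ : 0 ≤ β) (k : ℕ) (hk : r - 1 ≤ β * ((k : ℝ) + 1)) :
    nbPMF r p (k + 1) ≤ Real.exp β * nbPMF r p k := by
  have hr0 : 0 < r := by linarith
  rw [nb_succ hr0]
  have hnb := (nb_pos hr0 hp0 hp1 k).le
  have h1 : p * (((k : ℝ) + r) / ((k : ℝ) + 1)) ≤ Real.exp β := by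
    have h2 : ((k : ℝ) + r) / ((k : ℝ) + 1) ≤ 1 + β := by
      rw [div_le_iff₀ (by positivity)]
      nlinarith
    have h3 : (1 : ℝ) + β ≤ Real.exp β := by
      have := Real.add_one_le_exp β; linarith
    nlinarith [h2, h3, hp0.le, hp1.le,
      div_nonneg (by positivity : (0:ℝ) ≤ (k : ℝ) + r) (by positivity : (0:ℝ) ≤ (k : ℝ) + 1)]
  calc nbPMF r p k * (p * (((k : ℝ) + r) / ((k : ℝ) + 1))) ≤ nbPMF r p k * Real.exp β := by
        gcongr
    _ = Real.exp β * nbPMF r p k := by ring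

lemma nb_up_iter {β : ℝ} (hβ : 0 ≤ β) (k d : ℕ) (hk : r - 1 ≤ β * ((k : ℝ) + 1)) :
    nbPMF r p (k + d) ≤ Real.exp (β * d) * nbPMF r p k := by
  induction d with
  | zero => simp
  | succ d ih =>
    have hkd : r - 1 ≤ β * (((k + d : ℕ) : ℝ) + 1) := by
      push_cast
      nlinarith [hβ, Nat.cast_nonneg (α := ℝ) d]
    have key : nbPMF r p (k + (d + 1)) ≤ Real.exp (β * ((d : ℝ) + 1)) * nbPMF r p k := by
      calc nbPMF r p (k + (d + 1)) = nbPMF r p ((k + d) + 1) := by ring_nf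
        _ ≤ Real.exp β * nbPMF r p (k + d) := nb_step_up hr hp0 hp1 hβ (k + d) hkd
        _ ≤ Real.exp β * (Real.exp (β * d) * nbPMF r p k) := by gcongr
        _ = Real.exp (β * ((d : ℝ) + 1)) * nbPMF r p k := by
            rw [← mul_assoc, ← Real.exp_add]; ring_nf
    have hc : ((d + 1 : ℕ) : ℝ) = (d : ℝ) + 1 := by push_cast; ring
    rw [hc]
    exact key

end Steps
lemma ae_ne_zero : ∀ᵐ (x : ℝ), x ≠ 0 := by
  rw [MeasureTheory.ae_iff]
  simpa using Real.volume_singleton (x := 0)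

lemma gamma_series_sum {r y : ℝ} (hr : 0 < r) (hy0 : 0 ≤ y) (hy1 : y < 1) :
    ∑' k : ℕ, ENNReal.ofReal (Real.Gamma ((k : ℝ) + r) / (Nat.factorial k * Real.Gamma r) * y ^ k)
      = ENNReal.ofReal (Real.rpow (1 - y) (-r)) := by
  have hΓr : 0 < Real.Gamma r := Real.Gamma_pos_of_pos hr
  have h1y : 0 < 1 - y := by linarith
  have hkr : ∀ k : ℕ, (0:ℝ) < (k : ℝ) + r := fun k => by positivity
  -- coefficients
  set T : ℕ → ℝ := fun k => Real.Gamma ((k : ℝ) + r) / (Nat.factorial k * Real.Gamma r) * y ^ k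
    with hT
  have hTnn : ∀ k, 0 ≤ T k := fun k => by
    have := (Real.Gamma_pos_of_pos (hkr k)).le
    have : (0:ℝ) < (Nat.factorial k : ℝ) := by positivity
    positivity
  -- step 1: each term is an integral
  have step1 : ∀ k : ℕ, ENNReal.ofReal (T k)
      = ∫⁻ x : ℝ, ENNReal.ofReal (T k) * gammaPDF ((k : ℝ) + r) 1 x := by
    intro k
    rw [lintegral_const_mul' _ _ ENNReal.ofReal_ne_top,
      lintegral_gammaPDF_eq_one (hkr k) one_pos, mul_one]
  -- step 2: swap sum and integral
  have meas : ∀ k : ℕ, AEMeasurable (fun x : ℝ => ENNReal.ofReal (T k) * gammaPDF ((k:ℝ)+r) 1 x) := by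
    intro k
    exact ((measurable_gammaPDFReal _ _).ennreal_ofReal.const_mul _).aemeasurable
  have step2 : ∑' k : ℕ, ENNReal.ofReal (T k)
      = ∫⁻ x : ℝ, ∑' k : ℕ, ENNReal.ofReal (T k) * gammaPDF ((k : ℝ) + r) 1 x := by
    rw [tsum_congr step1]
    exact (lintegral_tsum meas).symm
  -- step 3: pointwise computation of the inner sum, away from 0
  have step3 : ∀ x : ℝ, x ≠ 0 →
      (∑' k : ℕ, ENNReal.ofReal (T k) * gammaPDF ((k : ℝ) + r) 1 x)
        = ENNReal.ofReal (Real.rpow (1 - y) (-r)) * gammaPDF r (1 - y) x := by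
    intro x hx
    rcases lt_or_gt_of_ne hx with hneg | hpos
    · simp [gammaPDF_of_neg hneg]
    · -- x > 0
      have hx0 : (0:ℝ) ≤ x := hpos.le
      have e1 : ∀ k : ℕ, ENNReal.ofReal (T k) * gammaPDF ((k : ℝ) + r) 1 x
          = ENNReal.ofReal ((Real.rpow x (r-1) * Real.exp (-x) / Real.Gamma r)
              * ((x * y) ^ k / Nat.factorial k)) := by
        intro k
        rw [gammaPDF_of_nonneg hx0, ← ENNReal.ofReal_mul (hTnn k)]
        congr 1
        have hΓk := Real.Gamma_pos_of_pos (hkr k)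
        have h1pow : Real.rpow (1:ℝ) ((k:ℝ) + r) = 1 := Real.one_rpow _
        have hxsplit : x ^ ((k : ℝ) + r - 1) = x ^ (k : ℕ) * x ^ (r - 1) := by
          rw [show (k : ℝ) + r - 1 = (k : ℝ) + (r - 1) by ring, Real.rpow_add hpos,
            Real.rpow_natCast]
        have hfk : (0:ℝ) < (Nat.factorial k : ℝ) := by positivity
        rw [hT]
        simp only []
        rw [show ((1:ℝ) ^ ((k:ℝ) + r) : ℝ) = Real.rpow 1 ((k:ℝ)+r) from rfl, h1pow]
        rw [show (x ^ ((k:ℝ) + r - 1) : ℝ) = x ^ (k : ℕ) * x ^ (r-1) from hxsplit]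
        field_simp
        simp only [Real.rpow_eq_pow]
        ring
      rw [tsum_congr e1]
      have Cnn : (0:ℝ) ≤ Real.rpow x (r-1) * Real.exp (-x) / Real.Gamma r := by
        have := (Real.rpow_pos_of_pos hpos (r-1)).le
        positivity
      have hsummable : Summable (fun k : ℕ =>
          (Real.rpow x (r-1) * Real.exp (-x) / Real.Gamma r) * ((x * y) ^ k / Nat.factorial k)) :=
        (Real.summable_pow_div_factorial (x * y)).mul_left _
      have hnn : ∀ k : ℕ, 0 ≤ (Real.rpow x (r-1) * Real.exp (-x) / Real.Gamma r)
          * ((x * y) ^ k / Nat.factorial k) := by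
        intro k
        have h1 : (0:ℝ) ≤ (x*y)^k := by positivity
        have h2 : (0:ℝ) < (Nat.factorial k : ℝ) := by positivity
        positivity
      rw [← ENNReal.ofReal_tsum_of_nonneg hnn hsummable]
      rw [tsum_mul_left]
      have hexp : ∑' k : ℕ, ((x * y) ^ k / (Nat.factorial k : ℝ)) = Real.exp (x * y) := by
        rw [Real.exp_eq_exp_ℝ]
        exact (NormedSpace.expSeries_div_hasSum_exp (x*y)).tsum_eq
      rw [hexp, gammaPDF_of_nonneg hx0]
      simp only [Real.rpow_eq_pow]
      rw [← ENNReal.ofReal_mul (Real.rpow_nonneg h1y.le _)]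
      congr 1
      have hsplit : Real.exp (-x) * Real.exp (x * y) = Real.exp (-((1-y) * x)) := by
        rw [← Real.exp_add]; ring_nf
      have hcancel : (1-y) ^ (-r) * (1-y) ^ r = (1:ℝ) := by
        rw [← Real.rpow_add h1y]; simp
      calc x ^ (r-1) * Real.exp (-x) / Real.Gamma r * Real.exp (x * y)
          = (x ^ (r-1) / Real.Gamma r) * (Real.exp (-x) * Real.exp (x*y)) := by ring
        _ = (x ^ (r-1) / Real.Gamma r) * Real.exp (-((1-y) * x)) := by rw [hsplit]
        _ = ((1-y) ^ (-r) * (1-y) ^ r) * (x ^ (r-1) / Real.Gamma r * Real.exp (-((1-y) * x))) := by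
            rw [hcancel, one_mul]
        _ = (1-y) ^ (-r) * ((1-y) ^ r / Real.Gamma r * x ^ (r-1) * Real.exp (-((1-y)*x))) := by
            ring
    -- end
  -- assemble
  rw [step2]
  rw [lintegral_congr_ae (ae_ne_zero.mono fun x hx => step3 x hx)]
  rw [lintegral_const_mul' _ _ ENNReal.ofReal_ne_top,
    lintegral_gammaPDF_eq_one hr h1y, mul_one]

section Sums
variable {r p : ℝ} (hr : 0 < r) (hp0 : 0 < p) (hp1 : p < 1)
include hr hp0 hp1

lemma nb_sum_mul {s : ℝ} (hs0 : 0 ≤ s) (hs1 : s ≤ 1) :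
    ∑' k : ℕ, ENNReal.ofReal (nbPMF r p k * s ^ k)
      = ENNReal.ofReal (Real.rpow (1 - p * s) (-r)) * ENNReal.ofReal (Real.rpow (1 - p) r) := by
  have hps0 : 0 ≤ p * s := by positivity
  have hps1 : p * s < 1 := by nlinarith
  have hterm : ∀ k : ℕ, ENNReal.ofReal (nbPMF r p k * s ^ k)
      = ENNReal.ofReal (Real.Gamma ((k : ℝ) + r) / (Nat.factorial k * Real.Gamma r) * (p * s) ^ k)
        * ENNReal.ofReal (Real.rpow (1 - p) r) := by
    intro k
    rw [← ENNReal.ofReal_mul (by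
      have h1 := (Real.Gamma_pos_of_pos (show (0:ℝ) < (k:ℝ) + r by positivity)).le
      have h2 : (0:ℝ) < (Nat.factorial k : ℝ) := by positivity
      positivity)]
    congr 1
    unfold nbPMF
    rw [mul_pow]
    ring
  rw [tsum_congr hterm, ENNReal.tsum_mul_right, gamma_series_sum hr hps0 hps1]

lemma nb_sum_one : ∑' k : ℕ, ENNReal.ofReal (nbPMF r p k) = 1 := by
  have h := nb_sum_mul hr hp0 hp1 (s := 1) zero_le_one le_rfl
  simp only [one_pow, mul_one] at h
  rw [h]
  simp only [Real.rpow_eq_pow]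
  rw [← ENNReal.ofReal_mul (Real.rpow_nonneg (by linarith) _)]
  rw [← Real.rpow_add (by linarith : (0:ℝ) < 1 - p)]
  simp

lemma nb_tail (t : ℕ) {s : ℝ} (hs0 : 0 < s) (hs1 : s ≤ 1) :
    ∑ k ∈ Finset.range t, ENNReal.ofReal (nbPMF r p k)
      ≤ ENNReal.ofReal ((1 / s ^ (t - 1)) *
          (Real.rpow (1 - p * s) (-r) * Real.rpow (1 - p) r)) := by
  have hnb : ∀ k, 0 ≤ nbPMF r p k := fun k => (nb_pos hr hp0 hp1 k).le
  have hps : p * s ≤ p := by nlinarith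
  have hps0 : (0:ℝ) ≤ 1 - p * s := by linarith
  have h1p : (0:ℝ) ≤ 1 - p := by linarith
  have hB : ∑' k : ℕ, ENNReal.ofReal (nbPMF r p k * s ^ k)
      = ENNReal.ofReal (Real.rpow (1 - p * s) (-r) * Real.rpow (1 - p) r) := by
    rw [nb_sum_mul hr hp0 hp1 hs0.le hs1]
    simp only [Real.rpow_eq_pow]
    rw [← ENNReal.ofReal_mul (Real.rpow_nonneg hps0 _)]
  have hBnn : (0:ℝ) ≤ Real.rpow (1 - p * s) (-r) * Real.rpow (1 - p) r :=
    mul_nonneg (Real.rpow_nonneg hps0 _) (Real.rpow_nonneg h1p _)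
  have h1 : (∑ k ∈ Finset.range t, ENNReal.ofReal (nbPMF r p k * s ^ k))
      ≤ ENNReal.ofReal (Real.rpow (1 - p * s) (-r) * Real.rpow (1 - p) r) := by
    rw [← hB]; exact ENNReal.sum_le_tsum _
  rw [← ENNReal.ofReal_sum_of_nonneg (fun k _ => mul_nonneg (hnb k) (by positivity))] at h1
  have h2 : ∑ k ∈ Finset.range t, nbPMF r p k * s ^ k
      ≤ Real.rpow (1 - p * s) (-r) * Real.rpow (1 - p) r :=
    (ENNReal.ofReal_le_ofReal_iff hBnn).mp h1
  have h3 : ∑ k ∈ Finset.range t, nbPMF r p k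
      ≤ (1 / s ^ (t - 1)) * ∑ k ∈ Finset.range t, nbPMF r p k * s ^ k := by
    rw [Finset.mul_sum]
    apply Finset.sum_le_sum
    intro k hk
    have hk' : k ≤ t - 1 := by
      have := Finset.mem_range.mp hk; omega
    have hpow : s ^ (t - 1) ≤ s ^ k := pow_le_pow_of_le_one hs0.le hs1 hk'
    have hsp : (0:ℝ) < s ^ (t - 1) := by positivity
    rw [div_mul_eq_mul_div, one_mul, le_div_iff₀ hsp]
    exact mul_le_mul_of_nonneg_left hpow (hnb k)
  have h4 : ∑ k ∈ Finset.range t, nbPMF r p k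
      ≤ (1 / s ^ (t - 1)) * (Real.rpow (1 - p * s) (-r) * Real.rpow (1 - p) r) := by
    calc ∑ k ∈ Finset.range t, nbPMF r p k
        ≤ (1 / s ^ (t - 1)) * ∑ k ∈ Finset.range t, nbPMF r p k * s ^ k := h3
      _ ≤ _ := mul_le_mul_of_nonneg_left h2 (by positivity)
  calc ∑ k ∈ Finset.range t, ENNReal.ofReal (nbPMF r p k)
      = ENNReal.ofReal (∑ k ∈ Finset.range t, nbPMF r p k) :=
        (ENNReal.ofReal_sum_of_nonneg (fun k _ => hnb k)).symm
    _ ≤ _ := ENNReal.ofReal_le_ofReal h4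


end Sums
lemma exp_five_sixths_le : Real.exp (5/6) ≤ 61/25 := by
  have h6 : Real.exp (5/6) ^ 6 = Real.exp 5 := by
    rw [← Real.exp_nat_mul]; norm_num
  have h5 : Real.exp 5 = Real.exp 1 ^ 5 := by
    rw [← Real.exp_nat_mul]; norm_num
  have he : Real.exp 1 < 2.7182818286 := Real.exp_one_lt_d9
  have hpow : Real.exp 1 ^ 5 ≤ (2.7182818286 : ℝ) ^ 5 := by
    apply pow_le_pow_left₀ (Real.exp_pos 1).le he.le
  have hnum : (2.7182818286 : ℝ) ^ 5 ≤ (61/25 : ℝ) ^ 6 := by norm_num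
  have : Real.exp (5/6) ^ 6 ≤ (61/25 : ℝ) ^ 6 := by
    rw [h6, h5]; linarith
  exact le_of_pow_le_pow_left₀ (by norm_num) (by norm_num) this

lemma numeric {ε δ : ℝ} {Δ : ℕ} (hε0 : 0 < ε) (hε1 : ε < 1) (hδ0 : 0 < δ) (hδ1 : δ < 1)
    (hΔ : 1 ≤ Δ) {α p r : ℝ} (hα : α = 0.2 * ε / (Δ : ℝ)) (hp : p = Real.exp (-α))
    (hr : r = 3 * (1 + Real.log (1 / δ))) {t : ℕ} (ht : t = Δ + ⌈(r - 1) / (4 * α)⌉₊) :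
    (1 / (p ^ 2) ^ (t - 1)) *
      (Real.rpow (1 - p * p ^ 2) (-r) * Real.rpow (1 - p) r) ≤ δ := by
  have hΔ1 : (1:ℝ) ≤ (Δ:ℝ) := by exact_mod_cast hΔ
  have hΔ0 : (0:ℝ) < (Δ:ℝ) := by linarith
  have hα0 : 0 < α := by rw [hα]; positivity
  have hαΔ : α * (Δ:ℝ) = 0.2 * ε := by rw [hα]; field_simp
  have hα15 : α ≤ 0.2 := by
    rw [hα, div_le_iff₀ hΔ0]; nlinarith
  have hp0 : 0 < p := by rw [hp]; exact Real.exp_pos _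
  have hp1 : p < 1 := by rw [hp]; exact Real.exp_lt_one_iff.mpr (by linarith)
  have hp45 : 4/5 ≤ p := by
    have := Real.add_one_le_exp (-α)
    rw [hp]; linarith
  have hr3 : 3 < r := by
    have hlogpos : 0 < Real.log (1/δ) := Real.log_pos (by rw [lt_div_iff₀ hδ0]; linarith)
    rw [hr]; linarith
  have hr0 : (0:ℝ) < r := by linarith
  have hlogδ : Real.log δ = 1 - r/3 := by
    rw [one_div, Real.log_inv] at hr; linarith
  have hδexp : δ = Real.exp (1 - r/3) := by rw [← hlogδ, Real.exp_log hδ0]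
  have h1p : (0:ℝ) < 1 - p := by linarith
  have hq0 : (0:ℝ) < 1 + p + p^2 := by positivity
  -- rewrite the rpow part
  have hfact : 1 - p * p^2 = (1 - p) * (1 + p + p^2) := by ring
  have hsplit : Real.rpow (1 - p * p^2) (-r) * Real.rpow (1 - p) r
      = (1 + p + p^2) ^ (-r) := by
    simp only [Real.rpow_eq_pow]
    rw [hfact, Real.mul_rpow h1p.le hq0.le]
    have : (1-p) ^ (-r) * (1-p) ^ r = 1 := by
      rw [← Real.rpow_add h1p]; simp
    calc (1-p) ^ (-r) * (1+p+p^2) ^ (-r) * (1-p) ^ r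
        = ((1-p) ^ (-r) * (1-p) ^ r) * (1+p+p^2) ^ (-r) := by ring
      _ = (1+p+p^2) ^ (-r) := by rw [this, one_mul]
  rw [hsplit]
  -- rewrite the power part
  have hpp : p ^ 2 = Real.exp (-(2*α)) := by
    rw [hp, ← Real.exp_nat_mul]; norm_num
  have hpow : (1 : ℝ) / (p^2) ^ (t-1) = Real.exp (2*α*((t-1 : ℕ):ℝ)) := by
    rw [hpp, ← Real.exp_nat_mul, one_div, ← Real.exp_neg]
    congr 1
    ring
  rw [hpow]
  have hrpow : (1 + p + p^2 : ℝ) ^ (-r) = Real.exp (Real.log (1+p+p^2) * (-r)) :=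
    Real.rpow_def_of_pos hq0 _
  rw [hrpow, ← Real.exp_add, hδexp]
  apply Real.exp_le_exp.mpr
  -- numeric exponent bound
  have hx0 : (0:ℝ) < (r-1)/(4*α) := div_pos (by linarith) (by linarith)
  have hceil : (⌈(r - 1) / (4 * α)⌉₊ : ℝ) < (r-1)/(4*α) + 1 := Nat.ceil_lt_add_one hx0.le
  have htpos : 1 ≤ t := by rw [ht]; omega
  have htcast : ((t - 1 : ℕ) : ℝ) ≤ (Δ:ℝ) + (r-1)/(4*α) := by
    have hc : ((t - 1 : ℕ) : ℝ) = (t:ℝ) - 1 := by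
      rw [Nat.cast_sub htpos]; norm_num
    rw [hc, ht]
    push_cast
    linarith
  have h2a : 2*α*((t-1 : ℕ):ℝ) ≤ 2*(α*(Δ:ℝ)) + (r-1)/2 := by
    have h := mul_le_mul_of_nonneg_left htcast (by positivity : (0:ℝ) ≤ 2*α)
    have heq : 2*α*((Δ:ℝ) + (r-1)/(4*α)) = 2*(α*(Δ:ℝ)) + (r-1)/2 := by
      field_simp; ring
    linarith
  have hlog56 : 5/6 ≤ Real.log (1+p+p^2) := by
    have hge : (61/25 : ℝ) ≤ 1 + p + p^2 := by nlinarith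
    have h1 : Real.log (61/25) ≤ Real.log (1+p+p^2) :=
      Real.log_le_log (by norm_num) hge
    have h2 : (5/6 : ℝ) ≤ Real.log (61/25) :=
      (Real.le_log_iff_exp_le (by norm_num)).mpr exp_five_sixths_le
    linarith
  have hrl : r * (5/6) ≤ r * Real.log (1+p+p^2) :=
    mul_le_mul_of_nonneg_left hlog56 hr0.le
  nlinarith [hαΔ, h2a, hrl, hε1, hε0]

lemma tsum_pi_prod : ∀ {K : ℕ} (g : Fin K → ℕ → ℝ≥0∞),
    ∑' v : Fin K → ℕ, ∏ b, g b (v b) = ∏ b, ∑' n : ℕ, g b n := by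
  intro K
  induction K with
  | zero =>
    intro g
    have h1 : ∀ v : Fin 0 → ℕ, (∏ b, g b (v b)) = 1 := fun v => by simp
    rw [tsum_congr h1]
    rw [tsum_eq_single (fun (i : Fin 0) => 0) (fun b hb => absurd (Subsingleton.elim b _) hb)]
    simp
  | succ K ih =>
    intro g
    rw [← (Fin.consEquiv (fun _ : Fin (K+1) => ℕ)).tsum_eq]
    have h1 : ∀ q : ℕ × (Fin K → ℕ),
        (∏ b, g b ((Fin.consEquiv (fun _ : Fin (K+1) => ℕ)) q b))
          = g 0 q.1 * ∏ i : Fin K, g i.succ (q.2 i) := by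
      intro q
      rw [Fin.prod_univ_succ]
      simp [Fin.consEquiv]
    rw [tsum_congr h1, ENNReal.tsum_prod']
    have h2 : ∀ a : ℕ, ∑' w : Fin K → ℕ, g 0 a * ∏ i : Fin K, g i.succ (w i)
        = g 0 a * ∏ i : Fin K, ∑' n : ℕ, g i.succ n := by
      intro a
      rw [ENNReal.tsum_mul_left, ih (fun i => g i.succ)]
    rw [tsum_congr h2, ENNReal.tsum_mul_right, Fin.prod_univ_succ]

lemma tsum_shift (m : ℕ) (g : ℕ → ℝ≥0∞) :
    ∑' n : ℕ, (if m ≤ n then g (n - m) else 0) = ∑' k : ℕ, g k := by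
  have hinj : Function.Injective (fun k : ℕ => m + k) := fun a b h => Nat.add_left_cancel h
  have hsupp : Function.support (fun n : ℕ => if m ≤ n then g (n - m) else 0)
      ⊆ Set.range (fun k : ℕ => m + k) := by
    intro n hn
    simp only [Function.mem_support] at hn
    by_cases h : m ≤ n
    · exact ⟨n - m, by show m + (n - m) = n; omega⟩
    · simp [h] at hn
  have := hinj.tsum_eq (f := fun n : ℕ => if m ≤ n then g (n - m) else 0) hsupp
  rw [← this]
  apply tsum_congr
  intro k
  simp

lemma tsum_shift_trunc (m t : ℕ) (g : ℕ → ℝ≥0∞) :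
    ∑' n : ℕ, (if n < m + t then (if m ≤ n then g (n - m) else 0) else 0)
      = ∑ k ∈ Finset.range t, g k := by
  have hinj : Function.Injective (fun k : ℕ => m + k) := fun a b h => Nat.add_left_cancel h
  have hsupp : Function.support
      (fun n : ℕ => if n < m + t then (if m ≤ n then g (n - m) else 0) else 0)
      ⊆ Set.range (fun k : ℕ => m + k) := by
    intro n hn
    simp only [Function.mem_support] at hn
    by_cases h : m ≤ n
    · exact ⟨n - m, by show m + (n - m) = n; omega⟩
    · simp [h] at hn
  have h1 := hinj.tsum_eq
    (f := fun n : ℕ => if n < m + t then (if m ≤ n then g (n - m) else 0) else 0) hsupp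
  rw [← h1]
  have h2 : ∀ k : ℕ, (if m + k < m + t then (if m ≤ m + k then g (m + k - m) else 0) else 0)
      = if k < t then g k else 0 := by
    intro k
    by_cases h : k < t
    · simp [h, Nat.le_add_right]
    · simp [h]
  rw [tsum_congr h2]
  rw [tsum_eq_sum (s := Finset.range t)
    (fun k hk => by simp only [Finset.mem_range] at hk; simp [hk])]
  exact Finset.sum_congr rfl (fun k hk => by simp [Finset.mem_range.mp hk])

lemma oneSided (K : ℕ)
    (ε δ : ℝ) (hε : ε ∈ Set.Ioo (0 : ℝ) 1) (hδ : δ ∈ Set.Ioo (0 : ℝ) 1)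
    (Δ : ℕ) (hΔ : 1 ≤ Δ)
    (p r : ℝ)
    (hp : p = Real.exp (-(0.2 * ε / (Δ : ℝ))))
    (hr : r = 3 * (1 + Real.log (1 / δ)))
    (R R' : Fin K → ℕ)
    (hcoord : ∀ b, |(R b : ℤ) - (R' b : ℤ)| ≤ (Δ : ℤ))
    (htotal : ∑ b, |(R b : ℤ) - (R' b : ℤ)| ≤ 2 * (Δ : ℤ))
    (S : Set (Fin K → ℕ)) :
    setProb (noisyHist K r p R) S ≤
      ENNReal.ofReal (Real.exp (2 * ε)) * setProb (noisyHist K r p R') S +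
        ENNReal.ofReal (2 * (Δ : ℝ) * δ) := by
  obtain ⟨hε0, hε1⟩ := hε
  obtain ⟨hδ0, hδ1⟩ := hδ
  -- basic numeric facts
  set α : ℝ := 0.2 * ε / (Δ : ℝ) with hα
  have hΔ1 : (1:ℝ) ≤ (Δ:ℝ) := by exact_mod_cast hΔ
  have hΔ0 : (0:ℝ) < (Δ:ℝ) := by linarith
  have hα0 : 0 < α := by rw [hα]; positivity
  have hαΔ : α * (Δ:ℝ) = 0.2 * ε := by rw [hα]; field_simp
  have hp0 : 0 < p := by rw [hp]; exact Real.exp_pos _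
  have hp1 : p < 1 := by rw [hp]; exact Real.exp_lt_one_iff.mpr (by linarith)
  have hr3 : 3 < r := by
    have hlogpos : 0 < Real.log (1/δ) := Real.log_pos (by rw [lt_div_iff₀ hδ0]; linarith)
    rw [hr]; linarith
  have hr1 : 1 < r := by linarith
  have hr0 : (0:ℝ) < r := by linarith
  have hx0 : (0:ℝ) < (r-1)/(4*α) := div_pos (by linarith) (by linarith)
  set t : ℕ := Δ + ⌈(r - 1) / (4 * α)⌉₊ with ht
  have htΔ : Δ < t := by
    have : 0 < ⌈(r - 1) / (4 * α)⌉₊ := Nat.ceil_pos.mpr hx0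
    omega
  -- notation
  set N : ℕ → ℝ≥0∞ := fun k => ENNReal.ofReal (nbPMF r p k) with hN
  set f : ℕ → ℕ → ℝ≥0∞ := fun m n => if m ≤ n then N (n - m) else 0 with hf
  have hν : ∀ (Q : Fin K → ℕ) (v : Fin K → ℕ),
      noisyHist K r p Q v = ∏ b, f (Q b) (v b) := fun Q v => rfl
  -- total mass of each marginal
  have hf1 : ∀ m : ℕ, ∑' n : ℕ, f m n = 1 := by
    intro m
    have h := tsum_shift m N
    calc ∑' n : ℕ, f m n = ∑' n : ℕ, (if m ≤ n then N (n - m) else 0) := rfl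
      _ = ∑' k : ℕ, N k := h
      _ = 1 := nb_sum_one hr0 hp0 hp1
  -- tail bound for each marginal
  have htail : ∀ m : ℕ, (∑' n : ℕ, if n < m + t then f m n else 0) ≤ ENNReal.ofReal δ := by
    intro m
    have h1 : ∑' n : ℕ, (if n < m + t then f m n else 0)
        = ∑ k ∈ Finset.range t, N k := by
      calc ∑' n : ℕ, (if n < m + t then f m n else 0)
          = ∑' n : ℕ, (if n < m + t then (if m ≤ n then N (n - m) else 0) else 0) := rfl
        _ = ∑ k ∈ Finset.range t, N k := tsum_shift_trunc m t N
    rw [h1]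
    have hs0 : (0:ℝ) < p ^ 2 := by positivity
    have hs1 : p ^ 2 ≤ 1 := by nlinarith
    calc ∑ k ∈ Finset.range t, N k
        ≤ ENNReal.ofReal ((1 / (p^2) ^ (t - 1)) *
            (Real.rpow (1 - p * p^2) (-r) * Real.rpow (1 - p) r)) :=
          nb_tail hr0 hp0 hp1 t hs0 hs1
      _ ≤ ENNReal.ofReal δ := ENNReal.ofReal_le_ofReal
          (numeric hε0 hε1 hδ0 hδ1 hΔ hα (by rw [hp]) hr ht)
  -- discrepancy per coordinate
  set D : Fin K → ℕ := fun b => ((R b : ℤ) - (R' b : ℤ)).natAbs with hD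
  have hDΔ : ∀ b, D b ≤ Δ := by
    intro b
    have h := hcoord b
    rw [Int.abs_eq_natAbs] at h
    simp only [hD]
    exact_mod_cast h
  have hDsum : ∑ b, (D b : ℤ) ≤ 2 * (Δ : ℤ) := by
    have h := htotal
    simp only [Int.abs_eq_natAbs] at h
    simpa [hD] using h
  -- the per-coordinate pointwise bound
  have hstep : ∀ (v : Fin K → ℕ) (b : Fin K), (R b < R' b → R b + t ≤ v b) →
      f (R b) (v b) ≤ ENNReal.ofReal (Real.exp (4 * α * (D b : ℝ))) * f (R' b) (v b) := by
    intro v b hvb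
    have hexp1 : (1:ℝ) ≤ Real.exp (4 * α * (D b : ℝ)) := by
      apply Real.one_le_exp
      have : (0:ℝ) ≤ (D b : ℝ) := Nat.cast_nonneg _
      nlinarith
    rcases lt_trichotomy (R b) (R' b) with hlt | heq | hgt
    · -- R b < R' b : numerator is shifted up
      have hvb' : R b + t ≤ v b := hvb hlt
      have hDb : D b = R' b - R b := by simp only [hD]; omega
      have hdΔ : R' b - R b ≤ Δ := by have := hDΔ b; omega
      set d : ℕ := R' b - R b with hd
      set k : ℕ := v b - R' b with hk
      have hRb : R b ≤ v b := by omega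
      have hRb' : R' b ≤ v b := by omega
      have hidx1 : v b - R b = k + d := by omega
      have hidx2 : v b - R' b = k := rfl
      have hkceil : ⌈(r - 1) / (4 * α)⌉₊ ≤ k := by omega
      have hkreal : (r - 1) / (4 * α) ≤ (k : ℝ) := le_trans (Nat.le_ceil _) (by exact_mod_cast hkceil)
      have hkcond : r - 1 ≤ (4 * α) * ((k:ℝ) + 1) := by
        rw [div_le_iff₀ (by linarith)] at hkreal
        nlinarith
      have hreal : nbPMF r p (k + d) ≤ Real.exp (4 * α * (d:ℝ)) * nbPMF r p k :=
        nb_up_iter hr1 hp0 hp1 (by linarith) k d hkcond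
      have hfRb : f (R b) (v b) = N (k + d) := by
        simp only [hf]; rw [if_pos hRb, hidx1]
      have hfRb' : f (R' b) (v b) = N k := by
        simp only [hf]; rw [if_pos hRb']
      rw [hfRb, hfRb', hDb]
      simp only [hN]
      rw [← ENNReal.ofReal_mul (Real.exp_pos _).le]
      exact ENNReal.ofReal_le_ofReal hreal
    · -- equal
      rw [heq]
      exact le_mul_of_one_le_left zero_le (ENNReal.one_le_ofReal.mpr hexp1)
    · -- R' b < R b : numerator is shifted down
      have hDb : D b = R b - R' b := by simp only [hD]; omega
      set d : ℕ := R b - R' b with hd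
      by_cases hRb : R b ≤ v b
      · set k : ℕ := v b - R b with hk
        have hRb' : R' b ≤ v b := by omega
        have hidx1 : v b - R b = k := rfl
        have hidx2 : v b - R' b = k + d := by omega
        have hreal : nbPMF r p k ≤ p⁻¹ ^ d * nbPMF r p (k + d) :=
          nb_down_iter hr1 hp0 hp1 k d
        have hpinv : p⁻¹ ^ d = Real.exp (α * d) := by
          rw [hp, ← Real.exp_neg, neg_neg, ← Real.exp_nat_mul, hα]
          ring_nf
        have hexp2 : Real.exp (α * d) ≤ Real.exp (4 * α * (d:ℝ)) := by
          apply Real.exp_le_exp.mpr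
          have : (0:ℝ) ≤ (d : ℝ) := Nat.cast_nonneg _
          nlinarith
        have hreal2 : nbPMF r p k ≤ Real.exp (4 * α * (d:ℝ)) * nbPMF r p (k + d) := by
          rw [hpinv] at hreal
          calc nbPMF r p k ≤ Real.exp (α * d) * nbPMF r p (k + d) := hreal
            _ ≤ Real.exp (4 * α * (d:ℝ)) * nbPMF r p (k + d) := by
                apply mul_le_mul_of_nonneg_right hexp2 (nb_pos hr0 hp0 hp1 _).le
        have hfRb : f (R b) (v b) = N k := by
          simp only [hf]; rw [if_pos hRb]
        have hfRb' : f (R' b) (v b) = N (k + d) := by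
          simp only [hf]; rw [if_pos hRb', hidx2]
        rw [hfRb, hfRb', hDb]
        simp only [hN]
        rw [← ENNReal.ofReal_mul (Real.exp_pos _).le]
        exact ENNReal.ofReal_le_ofReal hreal2
      · have hfRb : f (R b) (v b) = 0 := by simp only [hf]; rw [if_neg hRb]
        rw [hfRb]
        exact zero_le
  -- bad set
  set B : Set (Fin K → ℕ) := {v | ∃ b, R b < R' b ∧ v b < R b + t} with hB
  -- good pointwise bound
  have hgood : ∀ v, v ∉ B →
      noisyHist K r p R v ≤ ENNReal.ofReal (Real.exp (2 * ε)) * noisyHist K r p R' v := by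
    intro v hv
    have hvb : ∀ b, R b < R' b → R b + t ≤ v b := by
      intro b hb
      by_contra hcon
      exact hv ⟨b, hb, by omega⟩
    calc noisyHist K r p R v = ∏ b, f (R b) (v b) := hν R v
      _ ≤ ∏ b, (ENNReal.ofReal (Real.exp (4 * α * (D b : ℝ))) * f (R' b) (v b)) :=
          Finset.prod_le_prod' (fun b _ => hstep v b (hvb b))
      _ = (∏ b, ENNReal.ofReal (Real.exp (4 * α * (D b : ℝ)))) * ∏ b, f (R' b) (v b) :=
          Finset.prod_mul_distrib
      _ ≤ ENNReal.ofReal (Real.exp (2 * ε)) * noisyHist K r p R' v := by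
          rw [← hν R' v]
          apply mul_le_mul_left
          rw [← ENNReal.ofReal_prod_of_nonneg (fun b _ => (Real.exp_pos _).le)]
          apply ENNReal.ofReal_le_ofReal
          rw [← Real.exp_sum]
          apply Real.exp_le_exp.mpr
          have hsum : ∑ b, 4 * α * (D b : ℝ) = 4 * α * ∑ b, (D b : ℝ) := by
            rw [Finset.mul_sum]
          rw [hsum]
          have hcast : ∑ b, (D b : ℝ) ≤ 2 * (Δ:ℝ) := by
            have := hDsum
            push_cast at this ⊢
            exact_mod_cast this
          have h8 : 4 * α * (2 * (Δ:ℝ)) = 8 * (α * (Δ:ℝ)) := by ring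
          have hsum2 : 4 * α * ∑ b, (D b : ℝ) ≤ 8 * (α * (Δ:ℝ)) := by
            rw [← h8]
            apply mul_le_mul_of_nonneg_left hcast (by linarith)
          rw [hαΔ] at hsum2
          linarith
  -- bad set mass
  have hbad : ∑' v : Fin K → ℕ, Set.indicator B (noisyHist K r p R) v
      ≤ ENNReal.ofReal (2 * (Δ:ℝ) * δ) := by
    classical
    set bad : Finset (Fin K) := Finset.univ.filter (fun b => R b < R' b) with hbadset
    have hcard : bad.card ≤ 2 * Δ := by
      have h1 : (bad.card : ℤ) = ∑ b ∈ bad, (1:ℤ) := by simp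
      have h2 : ∑ b ∈ bad, (1:ℤ) ≤ ∑ b ∈ bad, (D b : ℤ) := by
        apply Finset.sum_le_sum
        intro b hb
        have hblt : R b < R' b := (Finset.mem_filter.mp hb).2
        have : 1 ≤ D b := by simp only [hD]; omega
        exact_mod_cast this
      have h3 : ∑ b ∈ bad, (D b : ℤ) ≤ ∑ b : Fin K, (D b : ℤ) :=
        Finset.sum_le_sum_of_subset_of_nonneg (Finset.filter_subset _ _)
          (fun b _ _ => by positivity)
      have : (bad.card : ℤ) ≤ 2 * (Δ:ℤ) := by
        rw [h1]; exact le_trans h2 (le_trans h3 hDsum)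
      exact_mod_cast this
    have hptw : ∀ v, Set.indicator B (noisyHist K r p R) v ≤
        ∑ b ∈ bad, Set.indicator {w : Fin K → ℕ | w b < R b + t} (noisyHist K r p R) v := by
      intro v
      by_cases hv : v ∈ B
      · obtain ⟨b, hb1, hb2⟩ := hv
        have hvB : v ∈ B := ⟨b, hb1, hb2⟩
        rw [Set.indicator_of_mem hvB]
        have hbbad : b ∈ bad := Finset.mem_filter.mpr ⟨Finset.mem_univ b, hb1⟩
        have hterm : Set.indicator {w : Fin K → ℕ | w b < R b + t} (noisyHist K r p R) v
            = noisyHist K r p R v :=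
          Set.indicator_of_mem (show v ∈ {w : Fin K → ℕ | w b < R b + t} from hb2) _
        calc noisyHist K r p R v
            = Set.indicator {w : Fin K → ℕ | w b < R b + t} (noisyHist K r p R) v := hterm.symm
          _ ≤ ∑ b ∈ bad, Set.indicator {w : Fin K → ℕ | w b < R b + t} (noisyHist K r p R) v :=
              Finset.single_le_sum
                (f := fun b => Set.indicator {w : Fin K → ℕ | w b < R b + t}
                  (noisyHist K r p R) v)
                (fun i _ => zero_le) hbbad
      · rw [Set.indicator_of_notMem hv]
        exact zero_le
    have hbadb : ∀ b ∈ bad,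
        (∑' v : Fin K → ℕ, Set.indicator {w : Fin K → ℕ | w b < R b + t} (noisyHist K r p R) v)
          ≤ ENNReal.ofReal δ := by
      intro b _
      set g : Fin K → ℕ → ℝ≥0∞ := fun c =>
        if c = b then (fun n => if n < R b + t then f (R b) n else 0) else f (R c) with hg
      have hgv : ∀ v : Fin K → ℕ,
          Set.indicator {w : Fin K → ℕ | w b < R b + t} (noisyHist K r p R) v
            = ∏ c, g c (v c) := by
        intro v
        by_cases h : v b < R b + t
        · rw [Set.indicator_of_mem (show v ∈ {w : Fin K → ℕ | w b < R b + t} from h), hν R v]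
          apply Finset.prod_congr rfl
          intro c _
          by_cases hc : c = b
          · subst hc; simp only [hg, if_pos rfl, if_pos h]
          · simp only [hg, if_neg hc]
        · rw [Set.indicator_of_notMem (show v ∉ {w : Fin K → ℕ | w b < R b + t} from h)]
          symm
          apply Finset.prod_eq_zero (Finset.mem_univ b)
          simp only [hg, if_pos rfl, if_neg h]
      rw [tsum_congr hgv, tsum_pi_prod g]
      rw [Finset.prod_eq_single_of_mem b (Finset.mem_univ b)
        (fun c _ hc => by simp only [hg, if_neg hc]; exact hf1 (R c))]
      have : ∑' n : ℕ, g b n = ∑' n : ℕ, (if n < R b + t then f (R b) n else 0) := by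
        apply tsum_congr; intro n; simp only [hg, if_pos rfl]
      rw [this]
      exact htail (R b)
    calc ∑' v : Fin K → ℕ, Set.indicator B (noisyHist K r p R) v
        ≤ ∑' v : Fin K → ℕ, ∑ b ∈ bad,
            Set.indicator {w : Fin K → ℕ | w b < R b + t} (noisyHist K r p R) v :=
          Summable.tsum_le_tsum hptw ENNReal.summable ENNReal.summable
      _ = ∑ b ∈ bad, ∑' v : Fin K → ℕ,
            Set.indicator {w : Fin K → ℕ | w b < R b + t} (noisyHist K r p R) v :=
          Summable.tsum_finsetSum (fun b _ => ENNReal.summable)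
      _ ≤ ∑ b ∈ bad, ENNReal.ofReal δ := Finset.sum_le_sum hbadb
      _ = (bad.card : ℝ≥0∞) * ENNReal.ofReal δ := by
          rw [Finset.sum_const, nsmul_eq_mul]
      _ ≤ ((2 * Δ : ℕ) : ℝ≥0∞) * ENNReal.ofReal δ := by
          apply mul_le_mul_left
          exact_mod_cast hcard
      _ = ENNReal.ofReal (2 * (Δ:ℝ) * δ) := by
          rw [← ENNReal.ofReal_natCast, ← ENNReal.ofReal_mul (by positivity)]
          congr 1
          push_cast
          ring
  -- assemble
  have hSP : ∀ (ν : (Fin K → ℕ) → ℝ≥0∞) (T : Set (Fin K → ℕ)),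
      setProb ν T = ∑' v, Set.indicator T ν v := fun ν T => tsum_subtype T ν
  rw [hSP, hSP]
  have hsplit : ∀ v, Set.indicator S (noisyHist K r p R) v
      ≤ Set.indicator (S \ B) (noisyHist K r p R) v
        + Set.indicator B (noisyHist K r p R) v := by
    intro v
    by_cases hvS : v ∈ S
    · by_cases hvB : v ∈ B
      · rw [Set.indicator_of_mem hvS, Set.indicator_of_mem hvB]
        exact le_add_left le_rfl
      · rw [Set.indicator_of_mem hvS, Set.indicator_of_mem (Set.mem_diff_of_mem hvS hvB)]
        exact le_self_add
    · rw [Set.indicator_of_notMem hvS]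
      exact zero_le
  have hgoodsum : ∑' v, Set.indicator (S \ B) (noisyHist K r p R) v
      ≤ ENNReal.ofReal (Real.exp (2 * ε)) * ∑' v, Set.indicator S (noisyHist K r p R') v := by
    rw [← ENNReal.tsum_mul_left]
    apply Summable.tsum_le_tsum _ ENNReal.summable ENNReal.summable
    intro v
    by_cases hv : v ∈ S \ B
    · rw [Set.indicator_of_mem hv, Set.indicator_of_mem hv.1]
      exact hgood v hv.2
    · rw [Set.indicator_of_notMem hv]
      exact zero_le
  calc ∑' v, Set.indicator S (noisyHist K r p R) v
      ≤ ∑' v, (Set.indicator (S \ B) (noisyHist K r p R) v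
          + Set.indicator B (noisyHist K r p R) v) :=
        Summable.tsum_le_tsum hsplit ENNReal.summable ENNReal.summable
    _ = (∑' v, Set.indicator (S \ B) (noisyHist K r p R) v)
        + ∑' v, Set.indicator B (noisyHist K r p R) v := ENNReal.tsum_add
    _ ≤ ENNReal.ofReal (Real.exp (2 * ε)) * ∑' v, Set.indicator S (noisyHist K r p R') v
        + ENNReal.ofReal (2 * (Δ:ℝ) * δ) := add_le_add hgoodsum hbad


end NBDP

/-- For any `K ≥ 1` clusters, `ε, δ ∈ (0,1)`, `Δ ≥ 1`, with `p = e^{−0.2ε/Δ}` and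
`r = 3(1 + log(1/δ))`, the noisy-histogram mechanism is `(2ε, 2Δδ)`-differentially
private with respect to any pair of histograms `R, R'` with `|R_b − R'_b| ≤ Δ` for
every `b` and `Σ_b |R_b − R'_b| ≤ 2Δ`. -/
theorem noisy_histogram_dp
    (K : ℕ) (hK : 1 ≤ K)
    (ε δ : ℝ) (hε : ε ∈ Set.Ioo (0 : ℝ) 1) (hδ : δ ∈ Set.Ioo (0 : ℝ) 1)
    (Δ : ℕ) (hΔ : 1 ≤ Δ)
    (p r : ℝ)
    (hp : p = Real.exp (-(0.2 * ε / (Δ : ℝ))))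
    (hr : r = 3 * (1 + Real.log (1 / δ)))
    (R R' : Fin K → ℕ)
    (hcoord : ∀ b, |(R b : ℤ) - (R' b : ℤ)| ≤ (Δ : ℤ))
    (htotal : ∑ b, |(R b : ℤ) - (R' b : ℤ)| ≤ 2 * (Δ : ℤ)) :
    ∀ S : Set (Fin K → ℕ),
      setProb (noisyHist K r p R) S ≤
        ENNReal.ofReal (Real.exp (2 * ε)) * setProb (noisyHist K r p R') S +
          ENNReal.ofReal (2 * (Δ : ℝ) * δ) ∧
      setProb (noisyHist K r p R') S ≤
        ENNReal.ofReal (Real.exp (2 * ε)) * setProb (noisyHist K r p R) S +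
          ENNReal.ofReal (2 * (Δ : ℝ) * δ) := by
  
  intro S
  constructor
  · exact NBDP.oneSided K ε δ hε hδ Δ hΔ p r hp hr R R' hcoord htotal S
  · refine NBDP.oneSided K ε δ hε hδ Δ hΔ p r hp hr R' R (fun b => ?_) ?_ S
    · rw [abs_sub_comm]; exact hcoord b
    · calc ∑ b, |(R' b : ℤ) - (R b : ℤ)| = ∑ b, |(R b : ℤ) - (R' b : ℤ)| :=
          Finset.sum_congr rfl (fun b _ => abs_sub_comm _ _)
        _ ≤ 2 * (Δ : ℤ) := htotal
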